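/- Let p be an odd prime, n a positive integer, and m = (p^n + 1)/2, with X = Z_p[t,t^{-1}]/(ξ_m(t)) where ξ_m(t) = Σ_{i=0}^{m-1}(-t)^i. Then t·ξ_m'(t) is invertible in X, where ξ_m' is the formal derivative of ξ_m. -/

import Mathlib

open LaurentPolynomial Finset Polynomial

/-- for an odd prime `p`, `n ≥ 1` and `m = (pⁿ+1)/2`, the element
`t·ξ_m'(t)` is invertible in `X = Z_p[t,t⁻¹]/(ξ_m(t))`, where
`ξ_m(t) = ∑_{i<m}(-t)^i` and `ξ_m'` is its formal derivative. -/
theorem stmt10 (p : ℕ) (hp : p.Prime) (hodd : Odd p) (n : ℕ) (hn : 0 < n) :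
    let m := (p ^ n + 1) / 2
    let ξm : Polynomial (ZMod p) := ∑ i ∈ Finset.range m, (-X) ^ i
    IsUnit (Ideal.Quotient.mk (Ideal.span {ξm.toLaurent})
      (T 1 * (Polynomial.derivative ξm).toLaurent)) := by
  intro m ξm
  have hpn : Odd (p ^ n) := hodd.pow
  have hm2 : 2 * m = p ^ n + 1 := by
    obtain ⟨k, hk⟩ := hpn
    simp only [m]; omega
  have hm1 : 1 ≤ m := by
    have hp1 : 1 ≤ p ^ n := Nat.one_le_pow _ _ hp.pos
    omega
  have hmZ : (m : ZMod p) * 2 = 1 := by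
    have h1 : ((2 * m : ℕ) : ZMod p) = ((p ^ n + 1 : ℕ) : ZMod p) := by rw [hm2]
    push_cast at h1
    rw [ZMod.natCast_self, zero_pow hn.ne'] at h1
    linear_combination h1
  -- key polynomial identity
  have hA : (1 + X) * ξm = 1 - (-X) ^ m := by
    have := geom_sum_mul (-X : (ZMod p)[X]) m
    linear_combination -this
  have hB := congrArg derivative hA
  simp only [derivative_mul, derivative_add, derivative_one, derivative_X, derivative_sub,
    derivative_pow, derivative_neg, zero_add, one_mul, mul_one, mul_neg, neg_neg] at hB
  have hc : m - 1 + 1 = m := Nat.succ_pred_eq_of_pos hm1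
  rw [← hc, pow_succ] at hA
  have hK : X * ((1 + X : (ZMod p)[X]) * derivative ξm) =
      (Polynomial.C (m : ZMod p) * (1 + X) - X) * ξm - Polynomial.C (m : ZMod p) := by
    linear_combination X * hB - Polynomial.C (m : ZMod p) * hA
  have hC : (Polynomial.C (m : ZMod p) * Polynomial.C 2 : (ZMod p)[X]) = 1 := by
    rw [← Polynomial.C_mul, hmZ, Polynomial.C_1]
  have hg : X * derivative ξm * (-(1 + X) * Polynomial.C 2) =
      (-Polynomial.C 2 * (Polynomial.C (m : ZMod p) * (1 + X) - X)) * ξm + 1 := by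
    linear_combination (-(Polynomial.C 2 : (ZMod p)[X])) * hK + hC
  refine IsUnit.of_mul_eq_one
    (Ideal.Quotient.mk _ ((-(1 + X) * Polynomial.C 2 : (ZMod p)[X]).toLaurent)) ?_
  rw [← map_mul, ← Polynomial.toLaurent_X, ← map_mul toLaurent, ← map_mul toLaurent, hg]
  have h0 : Ideal.Quotient.mk (Ideal.span {ξm.toLaurent}) ξm.toLaurent = 0 :=
    Ideal.Quotient.eq_zero_iff_mem.mpr (Ideal.subset_span rfl)
  simp [map_add, map_mul, h0]
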